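/- arXiv:2211.02170 — 4 statements merged into one kernel-verified Lean document; each statement's English description precedes it below -/
import Mathlib

section
/- Let k ≥ 1 and n ≥ binom(k+1, 2). An S-block [α|β] ∈ S-Block(n) belongs to A(n, k) if and only if [τ_k(n)|τ'_k(n)] ⪯ [α|β] and [α|β] ⪯ [γ|γ] for some γ ∈ Dis_k(n). Consequently A(n, k) is an amphora in S-Block(n) with minimum element [τ_k(n)|τ'_k(n)] and with antichain of maximal elements (Max)^n_k = {[γ|γ] : γ ∈ Dis_k(n)}. -/
/-- A partition: a non-increasing list of positive integers. -/
def IsPartition (π : List ℕ) : Prop :=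
  π.Pairwise (· ≥ ·) ∧ ∀ x ∈ π, 0 < x

/-- A partition of `n` into distinct positive parts, listed in (strictly) decreasing order. -/
def DisPart (n : ℕ) (γ : List ℕ) : Prop :=
  γ.Pairwise (· > ·) ∧ (∀ x ∈ γ, 0 < x) ∧ γ.sum = n

/-- A partition of `n` into exactly `k` distinct positive parts. -/
def DisPartK (n k : ℕ) (γ : List ℕ) : Prop :=
  DisPart n γ ∧ γ.length = k

/-- `β` majorizes `α`. -/
def Majorizes (β α : List ℕ) : Prop :=
  β.sum = α.sum ∧ ∀ k ≤ min α.length β.length, (α.take k).sum ≤ (β.take k).sum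

/-- α(π): the parts `d_i − i + 1` for 1-based indices `i` with `d_i ≥ i`. -/
def alphaOf (π : List ℕ) : List ℕ :=
  (List.range π.length).filterMap
    (fun i => if i + 1 ≤ π.getD i 0 then some (π.getD i 0 - i) else none)

/-- Number of boxes of the Ferrers diagram strictly below the diagonal in (1-based) column `j`. -/
def betaColCount (π : List ℕ) (j : ℕ) : ℕ :=
  ((List.range π.length).filter (fun i => decide (j ≤ i ∧ j ≤ π.getD i 0))).length

/-- β(π): the positive column counts below the main diagonal, in decreasing order. -/
def betaOf (π : List ℕ) : List ℕ :=
  ((List.range π.length).map (fun j => betaColCount π (j + 1))).filter (fun c => c != 0)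

/-- The mark (modified Durfee number) `m(π) = max {i : d_i ≥ i − 1}` (1-based indices). -/
noncomputable def mark (π : List ℕ) : ℕ :=
  sSup {i : ℕ | 1 ≤ i ∧ i ≤ π.length ∧ i ≤ π.getD (i - 1) 0 + 1}

def IsIndepSet {V : Type*} (G : SimpleGraph V) (s : Set V) : Prop :=
  s.Pairwise (fun v w => ¬ G.Adj v w)

/-- `(K, S)` is a KS-partition of `G`. -/
def IsKS {V : Type*} [Fintype V] (G : SimpleGraph V) (K S : Finset V) : Prop :=
  (∀ v, v ∈ K ∨ v ∈ S) ∧ Disjoint K S ∧ G.IsClique (K : Set V) ∧ IsIndepSet G (S : Set V)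

def IsSplit {V : Type*} [Fintype V] (G : SimpleGraph V) : Prop :=
  ∃ K S, IsKS G K S

noncomputable def cliqueNum {V : Type*} [Fintype V] (G : SimpleGraph V) : ℕ :=
  sSup {n | ∃ s : Finset V, G.IsNClique n s}

noncomputable def indepNum {V : Type*} [Fintype V] (G : SimpleGraph V) : ℕ :=
  sSup {n | ∃ s : Finset V, IsIndepSet G (s : Set V) ∧ s.card = n}

/-- A balanced split graph: some KS-partition is simultaneously K-max and S-max. -/
def IsBalancedSplit {V : Type*} [Fintype V] (G : SimpleGraph V) : Prop :=
  IsSplit G ∧ ∃ K S, IsKS G K S ∧ K.card = cliqueNum G ∧ S.card = indepNum G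

/-- An unbalanced split graph. -/
def IsUnbalancedSplit {V : Type*} [Fintype V] (G : SimpleGraph V) : Prop :=
  IsSplit G ∧ ¬ ∃ K S, IsKS G K S ∧ K.card = cliqueNum G ∧ S.card = indepNum G

/-- `π` is the degree sequence of `G` (degrees in non-increasing order). -/
def HasDegSeq {V : Type*} [Fintype V] (G : SimpleGraph V) [DecidableRel G.Adj]
    (π : List ℕ) : Prop :=
  π.Pairwise (· ≥ ·) ∧ (π : Multiset ℕ) = Finset.univ.val.map (fun v => G.degree v)

def NoIsolated {V : Type*} [Fintype V] (G : SimpleGraph V) [DecidableRel G.Adj] : Prop :=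
  ∀ v, 0 < G.degree v

def IsThreshold {V : Type*} [Fintype V] (G : SimpleGraph V) : Prop :=
  ∃ (t : ℝ) (a : V → ℝ), 0 < t ∧ (∀ v, 0 < a v) ∧
    ∀ s : Finset V, (IsIndepSet G (s : Set V) ↔ ∑ v ∈ s, a v ≤ t)

noncomputable def chromNum {V : Type*} [Fintype V] (G : SimpleGraph V) : ℕ :=
  sInf {n | G.Colorable n}

def IsNG {V : Type*} [Fintype V] (G : SimpleGraph V) : Prop :=
  chromNum G + chromNum Gᶜ = Fintype.card V + 1

def ngA {V : Type*} [Fintype V] (G : SimpleGraph V) [DecidableRel G.Adj] : Set V :=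
  {v | G.degree v = chromNum G - 1}

def IsNG1 {V : Type*} [Fintype V] (G : SimpleGraph V) [DecidableRel G.Adj] : Prop :=
  IsNG G ∧ G.IsClique (ngA G)

def IsNG2 {V : Type*} [Fintype V] (G : SimpleGraph V) [DecidableRel G.Adj] : Prop :=
  IsNG G ∧ IsIndepSet G (ngA G)

def IsNG3 {V : Type*} [Fintype V] (G : SimpleGraph V) [DecidableRel G.Adj] : Prop :=
  IsNG G ∧ Nonempty ((G.induce (ngA G)) ≃g SimpleGraph.cycleGraph 5)

/-- `[α|β]` is an S-block for the integer `n`. -/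
def IsSBlock (n : ℕ) (α β : List ℕ) : Prop :=
  DisPart n α ∧ DisPart n β ∧ Majorizes β α ∧
    (α.length = β.length ∨ α.length = β.length + 1)

/-- `[α₁|β₁] ⪰ [α₂|β₂]` in the block order. -/
def BlockMaj (α₁ β₁ α₂ β₂ : List ℕ) : Prop :=
  Majorizes α₁ α₂ ∧ Majorizes β₂ β₁

/-- τ'_k(n) = (n − C(k,2), k−1, k−2, …, 2, 1). -/
def tauMax (n k : ℕ) : List ℕ :=
  (n - Nat.choose k 2) :: ((List.range (k - 1)).reverse.map (· + 1))

/-- τ_k(n): parts (k−i+1)+q+1 for 1 ≤ i ≤ r and (k−i+1)+q for r < i ≤ k,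
where n − C(k+1,2) = qk + r, 0 ≤ r < k. -/
def tauMin (n k : ℕ) : List ℕ :=
  (List.range k).map
    (fun i => (k - i) + (n - Nat.choose (k + 1) 2) / k +
      (if i < (n - Nat.choose (k + 1) 2) % k then 1 else 0))

/-- `β` covers `α` in `Dis(n)`. -/
def CoversDis (n : ℕ) (β α : List ℕ) : Prop :=
  DisPart n α ∧ DisPart n β ∧ Majorizes β α ∧ β ≠ α ∧
    ¬ ∃ γ, DisPart n γ ∧ Majorizes β γ ∧ Majorizes γ α ∧ γ ≠ α ∧ γ ≠ β

/-- `[α₁|β₁]` covers `[α₂|β₂]` in `S-Block(n)`. -/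
def BlockCovers (n : ℕ) (α₁ β₁ α₂ β₂ : List ℕ) : Prop :=
  IsSBlock n α₁ β₁ ∧ IsSBlock n α₂ β₂ ∧ BlockMaj α₁ β₁ α₂ β₂ ∧ ¬(α₁ = α₂ ∧ β₁ = β₂) ∧
    ¬ ∃ α β, IsSBlock n α β ∧ BlockMaj α₁ β₁ α β ∧ BlockMaj α β α₂ β₂ ∧
      ¬(α = α₁ ∧ β = β₁) ∧ ¬(α = α₂ ∧ β = β₂)

/-- `[α|β]` is a threshold-covered block: member of TC(n). -/
def InTC (n : ℕ) (α β : List ℕ) : Prop :=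
  IsSBlock n α β ∧ CoversDis n β α

def IsLubDis (n : ℕ) (a b c : List ℕ) : Prop :=
  Majorizes c a ∧ Majorizes c b ∧
    ∀ d, DisPart n d → Majorizes d a → Majorizes d b → Majorizes d c

def IsGlbDis (n : ℕ) (a b c : List ℕ) : Prop :=
  Majorizes a c ∧ Majorizes b c ∧
    ∀ d, DisPart n d → Majorizes a d → Majorizes b d → Majorizes c d

private lemma getD_eq (l : List ℕ) (i : ℕ) (h : i < l.length) : l.getD i 0 = l[i] := by
  simp [List.getD_eq_getElem?_getD, List.getElem?_eq_getElem h]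

private lemma getD_pos (l : List ℕ) (hpos : ∀ x ∈ l, 0 < x) (i : ℕ) (h : i < l.length) :
    0 < l.getD i 0 := by
  rw [getD_eq l i h]; exact hpos _ (List.getElem_mem h)

/-- strict decrease gives gap bounds -/
private lemma sd (l : List ℕ) (hs : l.Pairwise (· > ·)) :
    ∀ j, j < l.length → ∀ i, i ≤ j → l.getD j 0 + (j - i) ≤ l.getD i 0 := by
  intro j
  induction j with
  | zero =>
    intro hj i hi
    have : i = 0 := by omega
    subst this; omega
  | succ m ih =>
    intro hj i hi
    have hadj : l.getD (m+1) 0 < l.getD m 0 := by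
      rw [getD_eq l (m+1) hj, getD_eq l m (by omega)]
      exact hs.rel_get_of_lt (a := ⟨m, by omega⟩) (b := ⟨m+1, hj⟩) (by simp)
    rcases Nat.lt_or_ge i (m+1) with hlt | hge
    · have := ih (by omega) i (by omega); omega
    · have : i = m + 1 := by omega
      subst this; omega

private lemma sum_take_eq (l : List ℕ) : ∀ j, j ≤ l.length →
    (l.take j).sum = ∑ i ∈ Finset.range j, l.getD i 0 := by
  intro j hj
  induction j with
  | zero => simp
  | succ m ih =>
    have hm : m < l.length := hj
    rw [Finset.sum_range_succ, ← ih (by omega), List.take_succ,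
      List.getElem?_eq_getElem hm, getD_eq l m hm]
    rw [List.sum_append, Option.toList_some, List.sum_cons, List.sum_nil]
    omega

private lemma sum_eq_range (l : List ℕ) :
    l.sum = ∑ i ∈ Finset.range l.length, l.getD i 0 := by
  have := sum_take_eq l l.length le_rfl
  rwa [List.take_length] at this

private lemma range_split (f : ℕ → ℕ) {j k : ℕ} (hj : j ≤ k) :
    ∑ i ∈ Finset.range j, f i + ∑ i ∈ Finset.Ico j k, f i = ∑ i ∈ Finset.range k, f i := by
  rw [Finset.range_eq_Ico, Finset.range_eq_Ico]
  exact Finset.sum_Ico_consecutive f (Nat.zero_le j) hj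

private lemma sum_drop_eq (l : List ℕ) (j : ℕ) (hj : j ≤ l.length) :
    (l.drop j).sum = ∑ i ∈ Finset.Ico j l.length, l.getD i 0 := by
  have h1 := List.sum_take_add_sum_drop l j
  rw [sum_take_eq l j hj, sum_eq_range l, ← range_split _ hj] at h1
  omega

private lemma listmap_sum (m : ℕ) (f : ℕ → ℕ) :
    ((List.range m).map f).sum = ∑ i ∈ Finset.range m, f i := by
  induction m with
  | zero => simp
  | succ p ih => rw [List.range_succ, Finset.sum_range_succ, List.map_append]; simp [ih]

private lemma sum_succ_eq (m : ℕ) : ∑ i ∈ Finset.range m, (i+1) = (m+1).choose 2 := by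
  induction m with
  | zero => simp
  | succ p ih =>
    rw [Finset.sum_range_succ, ih,
      show p + 1 + 1 = (p+1) + 1 from rfl, Nat.choose_succ_succ' (p+1) 1,
      show (1:ℕ) + 1 = 2 from rfl, Nat.choose_one_right]
    omega

private lemma sum_sub_eq (m : ℕ) : ∑ i ∈ Finset.range m, (m - i) = (m+1).choose 2 := by
  rw [← sum_succ_eq m, ← Finset.sum_range_reflect (fun i => i + 1) m]
  exact Finset.sum_congr rfl (fun i hi => by rw [Finset.mem_range] at hi; omega)

private lemma sum_ind (k r : ℕ) :
    ∑ i ∈ Finset.range k, (if i < r then 1 else 0) = min r k := by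
  induction k with
  | zero => simp
  | succ p ih => rw [Finset.sum_range_succ, ih]; split <;> omega

private lemma tauMin_length (n k : ℕ) : (tauMin n k).length = k := by simp [tauMin]

private lemma tauMin_getD (n k : ℕ) (i : ℕ) (hi : i < k) :
    (tauMin n k).getD i 0 = (k - i) + (n - Nat.choose (k + 1) 2) / k +
      (if i < (n - Nat.choose (k + 1) 2) % k then 1 else 0) := by
  rw [getD_eq _ _ (by rw [tauMin_length]; exact hi)]
  simp [tauMin]

private lemma tauMin_sum (n k : ℕ) (hk : 1 ≤ k) (hn : Nat.choose (k + 1) 2 ≤ n) :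
    (tauMin n k).sum = n := by
  rw [tauMin, listmap_sum]
  rw [Finset.sum_add_distrib, Finset.sum_add_distrib, sum_sub_eq, sum_ind,
    Finset.sum_const, Finset.card_range, smul_eq_mul]
  have hdm := Nat.div_add_mod (n - Nat.choose (k + 1) 2) k
  have hr : (n - Nat.choose (k + 1) 2) % k < k := Nat.mod_lt _ hk
  omega

private lemma tauMax_eq (n k : ℕ) :
    tauMax n k = (n - Nat.choose k 2) :: (List.range (k-1)).map (fun i => k - 1 - i) := by
  rw [tauMax]
  congr 1
  rw [List.range_eq_range', List.reverse_range', List.map_map, ← List.range_eq_range']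
  apply List.map_congr_left
  intro i hi
  simp only [List.mem_range] at hi
  simp only [Function.comp_apply]
  omega

private lemma tauMax_length (n k : ℕ) (hk : 1 ≤ k) : (tauMax n k).length = k := by
  rw [tauMax_eq]; simp; omega

private lemma tauMax_getD (n k : ℕ) (i : ℕ) (hi1 : 1 ≤ i) (hik : i < k) :
    (tauMax n k).getD i 0 = k - i := by
  rw [tauMax_eq]
  obtain ⟨m, rfl⟩ : ∃ m, i = m + 1 := ⟨i-1, by omega⟩
  rw [List.getD_cons_succ]
  rw [getD_eq _ _ (by simp; omega), List.getElem_map, List.getElem_range]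
  omega

private lemma tauMax_sum (n k : ℕ) (hk : 1 ≤ k) (hn : Nat.choose (k + 1) 2 ≤ n) :
    (tauMax n k).sum = n := by
  have hc : Nat.choose k 2 ≤ n := le_trans (Nat.choose_le_choose 2 (by omega)) hn
  rw [tauMax_eq, List.sum_cons, listmap_sum]
  have h2 : ∑ i ∈ Finset.range (k-1), (k - 1 - i) = Nat.choose k 2 := by
    have := sum_sub_eq (k-1)
    rw [this]
    congr 1
    omega
  rw [h2]
  omega

private lemma tauMin_take_le (n k : ℕ) (hk : 1 ≤ k) (hn : Nat.choose (k + 1) 2 ≤ n)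
    (α : List ℕ) (hs : α.Pairwise (· > ·)) (hsum : α.sum = n) (hlen : α.length = k)
    (j : ℕ) (hj : j ≤ k) :
    ((tauMin n k).take j).sum ≤ (α.take j).sum := by
  rcases Nat.eq_zero_or_pos j with rfl | hj1
  · simp
  have htlen : (tauMin n k).length = k := tauMin_length n k
  have hSD : ∀ i i', i ≤ i' → i' < k → α.getD i' 0 + (i' - i) ≤ α.getD i 0 := by
    intro i i' h1 h2
    exact sd α hs i' (by omega) i h1
  rw [sum_take_eq α j (by omega), sum_take_eq (tauMin n k) j (by omega)]
  rcases Nat.lt_or_ge (α.getD (j-1) 0) (k - j + (n - Nat.choose (k + 1) 2) / k + 2) with hB | hA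
  · -- case B : compare tails
    have hdropcmp : ∑ i ∈ Finset.Ico j k, α.getD i 0
        ≤ ∑ i ∈ Finset.Ico j k, (tauMin n k).getD i 0 := by
      apply Finset.sum_le_sum
      intro i hi
      rw [Finset.mem_Ico] at hi
      have h1 := hSD (j-1) i (by omega) hi.2
      rw [tauMin_getD n k i hi.2]
      have hite : (if i < (n - Nat.choose (k + 1) 2) % k then 1 else 0) ≤ 1 := by
        split <;> simp
      omega
    have hαtot : ∑ i ∈ Finset.range k, α.getD i 0 = n := by
      have h0 := sum_eq_range α
      rw [hlen, hsum] at h0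
      omega
    have httot : ∑ i ∈ Finset.range k, (tauMin n k).getD i 0 = n := by
      have h0 := sum_eq_range (tauMin n k)
      rw [htlen, tauMin_sum n k hk hn] at h0
      omega
    have hsplitα := range_split (fun i => α.getD i 0) hj
    have hsplitt := range_split (fun i => (tauMin n k).getD i 0) hj
    omega
  · -- case A : compare prefixes termwise
    apply Finset.sum_le_sum
    intro i hi
    rw [Finset.mem_range] at hi
    have h1 := hSD i (j-1) (by omega) (by omega)
    rw [tauMin_getD n k i (by omega)]
    have hite : (if i < (n - Nat.choose (k + 1) 2) % k then 1 else 0) ≤ 1 := by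
      split <;> simp
    omega

private lemma take_le_tauMax (n k : ℕ) (hk : 1 ≤ k) (hn : Nat.choose (k + 1) 2 ≤ n)
    (β : List ℕ) (hs : β.Pairwise (· > ·)) (hpos : ∀ x ∈ β, 0 < x) (hsum : β.sum = n)
    (hlen : β.length = k) (j : ℕ) (hj : j ≤ k) :
    (β.take j).sum ≤ ((tauMax n k).take j).sum := by
  rcases Nat.eq_zero_or_pos j with rfl | hj1
  · simp
  have hxlen : (tauMax n k).length = k := tauMax_length n k hk
  have hge : ∀ i, i < k → k - i ≤ β.getD i 0 := by
    intro i hi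
    have h1 := sd β hs (k-1) (by omega) i (by omega)
    have h2 : 0 < β.getD (k-1) 0 := getD_pos β hpos (k-1) (by omega)
    omega
  rw [sum_take_eq β j (by omega), sum_take_eq (tauMax n k) j (by omega)]
  have hdropcmp : ∑ i ∈ Finset.Ico j k, (tauMax n k).getD i 0
      ≤ ∑ i ∈ Finset.Ico j k, β.getD i 0 := by
    apply Finset.sum_le_sum
    intro i hi
    rw [Finset.mem_Ico] at hi
    rw [tauMax_getD n k i (by omega) hi.2]
    exact hge i hi.2
  have hβtot : ∑ i ∈ Finset.range k, β.getD i 0 = n := by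
    have h0 := sum_eq_range β
    rw [hlen, hsum] at h0
    omega
  have hxtot : ∑ i ∈ Finset.range k, (tauMax n k).getD i 0 = n := by
    have h0 := sum_eq_range (tauMax n k)
    rw [hxlen, tauMax_sum n k hk hn] at h0
    omega
  have hsplitβ := range_split (fun i => β.getD i 0) hj
  have hsplitx := range_split (fun i => (tauMax n k).getD i 0) hj
  omega

/-- For k ≥ 1 and n ≥ C(k+1,2), an S-block [α|β] ∈ S-Block(n) belongs to
A(n,k) (i.e. α, β ∈ Dis_k(n)) iff [τ_k(n)|τ'_k(n)] ⪯ [α|β] and [α|β] ⪯ [γ|γ] for some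
γ ∈ Dis_k(n); hence A(n,k) is an amphora with minimum [τ_k(n)|τ'_k(n)] and maximal
antichain (Max)ⁿ_k = {[γ|γ] : γ ∈ Dis_k(n)}. -/
theorem stmt12 (n k : ℕ) (hk : 1 ≤ k) (hn : Nat.choose (k + 1) 2 ≤ n)
    (α β : List ℕ) (h : IsSBlock n α β) :
    (DisPartK n k α ∧ DisPartK n k β) ↔
      (BlockMaj α β (tauMin n k) (tauMax n k) ∧
        ∃ γ, DisPartK n k γ ∧ BlockMaj γ γ α β) := by
  obtain ⟨hαd, hβd, hβα, hlens⟩ := h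
  have htlen : (tauMin n k).length = k := tauMin_length n k
  have hxlen : (tauMax n k).length = k := tauMax_length n k hk
  constructor
  · rintro ⟨⟨_, hαl⟩, ⟨_, hβl⟩⟩
    refine ⟨⟨⟨?_, ?_⟩, ⟨?_, ?_⟩⟩, β, ⟨hβd, hβl⟩, hβα, ⟨rfl, fun _ _ => le_rfl⟩⟩
    · rw [hαd.2.2, tauMin_sum n k hk hn]
    · intro j hjle
      rw [htlen, hαl, min_self] at hjle
      exact tauMin_take_le n k hk hn α hαd.1 hαd.2.2 hαl j hjle
    · rw [tauMax_sum n k hk hn, hβd.2.2]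
    · intro j hjle
      rw [hxlen, hβl, min_self] at hjle
      exact take_le_tauMax n k hk hn β hβd.1 hβd.2.1 hβd.2.2 hβl j hjle
  · rintro ⟨⟨hmin1, hmin2⟩, -⟩
    have hnpos : 1 ≤ n := le_trans (Nat.choose_pos (by omega)) hn
    have hαle : α.length ≤ k := by
      by_contra hc
      push_neg at hc
      have h2 := hmin1.2 k (by rw [htlen]; omega)
      rw [List.take_of_length_le htlen.le, tauMin_sum n k hk hn] at h2
      have h3 := List.sum_take_add_sum_drop α k
      rw [hαd.2.2] at h3
      have h4 : 0 < (α.drop k).sum := by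
        have hne : α.drop k ≠ [] := by
          intro he
          have := congrArg List.length he
          simp at this
          omega
        obtain ⟨x, t, hxt⟩ := List.exists_cons_of_ne_nil hne
        have hxmem : x ∈ α := List.mem_of_mem_drop (by rw [hxt]; exact List.mem_cons_self)
        have hxpos := hαd.2.1 x hxmem
        rw [hxt, List.sum_cons]
        omega
      omega
    have hβge : k ≤ β.length := by
      by_contra hc
      push_neg at hc
      rcases Nat.eq_zero_or_pos β.length with h0 | h1
      · have hβnil : β = [] := List.length_eq_zero_iff.mp h0
        have hβs := hβd.2.2
        rw [hβnil, List.sum_nil] at hβs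
        omega
      · have h2 := hmin2.2 β.length (by rw [hxlen]; omega)
        rw [List.take_length, hβd.2.2] at h2
        have h3 := List.sum_take_add_sum_drop (tauMax n k) β.length
        rw [tauMax_sum n k hk hn] at h3
        have h4 : 0 < ((tauMax n k).drop β.length).sum := by
          rw [sum_drop_eq _ _ (by omega), hxlen]
          have hmem : k - 1 ∈ Finset.Ico β.length k := by
            rw [Finset.mem_Ico]; omega
          have hone : (tauMax n k).getD (k-1) 0 = k - (k-1) :=
            tauMax_getD n k (k-1) (by omega) (by omega)
          calc 0 < (tauMax n k).getD (k-1) 0 := by rw [hone]; omega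
            _ ≤ ∑ i ∈ Finset.Ico β.length k, (tauMax n k).getD i 0 :=
              Finset.single_le_sum (f := fun i => (tauMax n k).getD i 0)
                (fun i _ => Nat.zero_le _) hmem
        omega
    have hlk : α.length = k ∧ β.length = k := by rcases hlens with h1 | h1 <;> omega
    exact ⟨⟨hαd, hlk.1⟩, ⟨hβd, hlk.2⟩⟩
end

section
/- Let [α_1|β_1], [α_2|β_2] ∈ S-Block(n). If [α_1|β_1] covers [α_2|β_2] in S-Block(n), then either α_1 = α_2 and β_2 covers β_1 in Dis(n), or β_1 = β_2 and α_1 covers α_2 in Dis(n). -/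
lemma maj_refl (a : List ℕ) : Majorizes a a := ⟨rfl, fun _ _ => le_rfl⟩

lemma len_le_of_maj {β α : List ℕ} (hpos : ∀ x ∈ β, 0 < x) (h : Majorizes β α) :
    β.length ≤ α.length := by
  by_contra hlt
  push_neg at hlt
  have h1 := h.2 α.length (by omega)
  rw [List.take_length] at h1
  have h2 : (β.take α.length).sum < β.sum := by
    conv_rhs => rw [← List.take_append_drop α.length β]
    rw [List.sum_append]
    have hne : β.drop α.length ≠ [] := by
      intro hcon
      have := List.drop_eq_nil_iff.mp hcon
      omega
    have : 0 < (β.drop α.length).sum :=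
      List.sum_pos _ (fun x hx => hpos x (List.mem_of_mem_drop hx)) hne
    omega
  have := h.1
  omega

lemma maj_trans {a b c : List ℕ} (hcpos : ∀ x ∈ c, 0 < x) (hbpos : ∀ x ∈ b, 0 < x)
    (h1 : Majorizes c b) (h2 : Majorizes b a) : Majorizes c a := by
  have l1 := len_le_of_maj hcpos h1
  have l2 := len_le_of_maj hbpos h2
  refine ⟨h1.1.trans h2.1, fun k hk => ?_⟩
  have hA := h2.2 k (by omega)
  have hB := h1.2 k (by omega)
  omega

/-- If [α₁|β₁] covers [α₂|β₂] in S-Block(n) then either α₁ = α₂ and β₂ covers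
β₁ in Dis(n), or β₁ = β₂ and α₁ covers α₂ in Dis(n). -/
theorem stmt13 (n : ℕ) (α₁ β₁ α₂ β₂ : List ℕ) (h : BlockCovers n α₁ β₁ α₂ β₂) :
    (α₁ = α₂ ∧ CoversDis n β₂ β₁) ∨ (β₁ = β₂ ∧ CoversDis n α₁ α₂) := by
  obtain ⟨hB1, hB2, ⟨hαm, hβm⟩, hne, hnomid⟩ := h
  obtain ⟨hα₁, hβ₁, hmaj1, hlen1⟩ := hB1
  obtain ⟨hα₂, hβ₂, hmaj2, hlen2⟩ := hB2
  have pα₁ := hα₁.2.1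
  have pβ₁ := hβ₁.2.1
  have pβ₂ := hβ₂.2.1
  have lA : α₁.length ≤ α₂.length := len_le_of_maj pα₁ hαm
  have lB : β₂.length ≤ β₁.length := len_le_of_maj pβ₂ hβm
  have lC : β₁.length ≤ α₁.length := len_le_of_maj pβ₁ hmaj1
  have hmid : IsSBlock n α₂ β₁ := by
    refine ⟨hα₂, hβ₁, maj_trans pβ₁ pα₁ hmaj1 hαm, ?_⟩
    omega
  have key : α₂ = α₁ ∨ β₁ = β₂ := by
    by_contra hk
    push_neg at hk
    exact hnomid ⟨α₂, β₁, hmid, ⟨hαm, maj_refl β₁⟩, ⟨maj_refl α₂, hβm⟩,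
      fun hh => hk.1 hh.1, fun hh => hk.2 hh.2⟩
  rcases key with hEq | hEq
  · left
    refine ⟨hEq.symm, hβ₁, hβ₂, hβm, ?_, ?_⟩
    · intro hcon
      exact hne ⟨hEq.symm, hcon.symm⟩
    · rintro ⟨γ, hγ, hmγ1, hmγ2, hγne1, hγne2⟩
      have pγ := hγ.2.1
      have lγ1 : γ.length ≤ β₁.length := len_le_of_maj pγ hmγ2
      have lγ2 : β₂.length ≤ γ.length := len_le_of_maj pβ₂ hmγ1
      have hblk : IsSBlock n α₁ γ := by
        refine ⟨hα₁, hγ, maj_trans pγ pβ₁ hmγ2 hmaj1, ?_⟩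
        have : α₁.length = α₂.length := by rw [hEq]
        omega
      exact hnomid ⟨α₁, γ, hblk, ⟨maj_refl α₁, hmγ2⟩,
        ⟨by rw [hEq]; exact maj_refl α₁, hmγ1⟩, fun hh => hγne1 hh.2, fun hh => hγne2 hh.2⟩
  · right
    refine ⟨hEq, hα₂, hα₁, hαm, ?_, ?_⟩
    · intro hcon
      exact hne ⟨hcon, hEq⟩
    · rintro ⟨γ, hγ, hmγ1, hmγ2, hγne1, hγne2⟩
      have pγ := hγ.2.1
      have lγ1 : γ.length ≤ α₂.length := len_le_of_maj pγ hmγ2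
      have lγ2 : α₁.length ≤ γ.length := len_le_of_maj pα₁ hmγ1
      have hblk : IsSBlock n γ β₁ := by
        refine ⟨hγ, hβ₁, ?_, ?_⟩
        · exact maj_trans pβ₁ pα₁ hmaj1 hmγ1
        · have : β₁.length = β₂.length := by rw [hEq]
          omega
      exact hnomid ⟨γ, β₁, hblk, ⟨hmγ1, maj_refl β₁⟩,
        ⟨hmγ2, by rw [hEq]; exact maj_refl β₂⟩, fun hh => hγne2 hh.1, fun hh => hγne1 hh.1⟩
end

section
/- Let G be an unbalanced split graph with no isolated vertices and with degree sequence π. Then G is an NG-1 graph if and only if the smallest part of β(π) equals 1, and G is an NG-2 graph if and only if the smallest part of α(π) is at least 2. -/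
lemma sorted_getD_iff : ∀ (l : List ℕ), l.Pairwise (· ≥ ·) → ∀ (c i : ℕ), i < l.length →
    (c ≤ l.getD i 0 ↔ i < l.countP (fun x => decide (c ≤ x)))
  | [], _, c, i, hi => absurd hi (by simp)
  | a :: t, hl, c, i, hi => by
    obtain ⟨ha, ht⟩ := List.pairwise_cons.mp hl
    cases i with
    | zero =>
      simp only [List.getD_cons_zero, List.countP_cons]
      constructor
      · intro h
        simp [decide_eq_true_eq, h]
      · intro h
        by_contra hca
        have h0 : t.countP (fun x => decide (c ≤ x)) = 0 := by
          rw [List.countP_eq_zero]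
          intro x hx
          have := ha x hx
          simp only [decide_eq_true_eq]
          omega
        simp [h0, hca] at h
    | succ i =>
      simp only [List.getD_cons_succ, List.countP_cons, List.length_cons] at *
      have hi' : i < t.length := by omega
      have IH := sorted_getD_iff t ht c i hi'
      by_cases hca : c ≤ a
      · simp only [hca, decide_true, if_pos, cond_true]
        rw [IH]
        omega
      · have h0 : t.countP (fun x => decide (c ≤ x)) = 0 := by
          rw [List.countP_eq_zero]
          intro x hx
          have := ha x hx
          simp only [decide_eq_true_eq]
          omega
        have hmem : t.getD i 0 ∈ t := by
          rw [List.getD_eq_getElem _ _ hi']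
          exact List.getElem_mem _
        have hta := ha _ hmem
        rw [show (decide (c ≤ a)) = false by simpa using hca, h0]
        simp only [Bool.false_eq_true, if_false]
        constructor
        · intro h; omega
        · intro h; omega

lemma length_filter_range_interval (a b : ℕ) : ∀ (m : ℕ),
    ((List.range m).filter (fun i => decide (a ≤ i ∧ i < b))).length = min b m - a
  | 0 => by simp
  | (m+1) => by
    rw [List.range_succ, List.filter_append, List.length_append,
      length_filter_range_interval a b m]
    by_cases h : a ≤ m ∧ m < b
    · simp only [List.filter_cons, h, decide_eq_true_eq, if_pos, List.filter_nil]
      simp only [and_self, h]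
      simp
      omega
    · have : (decide (a ≤ m ∧ m < b)) = false := by simpa using h
      simp only [List.filter_cons, this, List.filter_nil]
      simp
      omega

lemma countP_degseq {V : Type} [Fintype V] (G : SimpleGraph V) [DecidableRel G.Adj]
    (π : List ℕ) (h : (π : Multiset ℕ) = Finset.univ.val.map (fun v => G.degree v))
    (c : ℕ) :
    π.countP (fun x => decide (c ≤ x)) = (Finset.univ.filter (fun v => c ≤ G.degree v)).card := by
  have h1 : Multiset.countP (fun x => c ≤ x) (π : Multiset ℕ) =
      π.countP (fun x => decide (c ≤ x)) := Multiset.coe_countP _ _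
  rw [← h1, h, Multiset.countP_map]
  rfl

lemma colorable_of_KS {V : Type} [Fintype V] (H : SimpleGraph V) (K S : Finset V)
    (hKS : IsKS H K S) (h : ∀ w, w ∉ K → ∃ x, x ∈ K ∧ ¬ H.Adj w x) : H.Colorable K.card := by
  classical
  obtain ⟨hcov, hdis, hcl, hind⟩ := hKS
  let C : V → {x // x ∈ K} := fun v =>
    if hv : v ∈ K then ⟨v, hv⟩ else ⟨(h v hv).choose, ((h v hv).choose_spec).1⟩
  have hvalid : ∀ {v w : V}, H.Adj v w → C v ≠ C w := by
    intro v w hadj heq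
    by_cases hv : v ∈ K <;> by_cases hw : w ∈ K
    · have : v = w := by simpa [C, hv, hw] using heq
      exact H.loopless.irrefl v (this ▸ hadj)
    · have h1 : ((h w hw).choose) = v := by
        have := heq
        simp only [C, dif_pos hv, dif_neg hw, Subtype.mk.injEq] at this
        exact this.symm
      exact ((h w hw).choose_spec).2 (h1 ▸ hadj.symm)
    · have h1 : ((h v hv).choose) = w := by
        simp only [C, dif_neg hv, dif_pos hw, Subtype.mk.injEq] at heq
        exact heq
      exact ((h v hv).choose_spec).2 (h1 ▸ hadj)
    · have hvS : v ∈ S := (hcov v).resolve_left hv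
      have hwS : w ∈ S := (hcov w).resolve_left hw
      exact hind (Finset.mem_coe.mpr hvS) (Finset.mem_coe.mpr hwS) hadj.ne hadj
  have hc : H.Colorable (Fintype.card {x // x ∈ K}) :=
    (SimpleGraph.Coloring.mk C hvalid).colorable
  simpa [Fintype.card_coe] using hc

lemma chromNum_eq_of_KS {V : Type} [Fintype V] (H : SimpleGraph V) (K S : Finset V)
    (hKS : IsKS H K S) (h : ∀ w, w ∉ K → ∃ x, x ∈ K ∧ ¬ H.Adj w x) :
    chromNum H = K.card := by
  have hcol : H.Colorable K.card := colorable_of_KS H K S hKS h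
  apply le_antisymm
  · exact Nat.sInf_le hcol
  · have hne : {n | H.Colorable n}.Nonempty := Set.nonempty_of_mem (show K.card ∈ {n | H.Colorable n} from hcol)
    apply le_csInf hne
    intro m hm
    have := (hKS.2.2.1).card_le_of_colorable hm
    exact this

/-- Let G be an unbalanced split graph with no isolated vertices and degree
sequence π.  Then G is NG-1 iff the smallest part of β(π) equals 1, and G is NG-2 iff the
smallest part of α(π) is at least 2. -/

theorem stmt16 {V : Type} [Fintype V] (G : SimpleGraph V) [DecidableRel G.Adj]
    (hG : IsUnbalancedSplit G) (hiso : NoIsolated G) (π : List ℕ) (hπ : HasDegSeq G π) :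
    (IsNG1 G ↔ (betaOf π).getLast? = some 1) ∧
      (IsNG2 G ↔ ∀ x ∈ alphaOf π, 2 ≤ x) := by
  classical
  obtain ⟨⟨K₀, S₀, hKS₀⟩, hnb⟩ := hG
  have hPne : ((Finset.univ : Finset (Finset V)).filter (fun K => ∃ S, IsKS G K S)).Nonempty :=
    ⟨K₀, Finset.mem_filter.mpr ⟨Finset.mem_univ _, S₀, hKS₀⟩⟩
  obtain ⟨K, hKmem, hKmax'⟩ := Finset.exists_max_image _ Finset.card hPne
  obtain ⟨S, hKS⟩ := (Finset.mem_filter.mp hKmem).2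
  obtain ⟨hcov, hdis, hcl, hind⟩ := hKS
  set k := K.card with hk
  have hKmax : ∀ K' S', IsKS G K' S' → K'.card ≤ k := fun K' S' h =>
    hKmax' K' (Finset.mem_filter.mpr ⟨Finset.mem_univ _, S', h⟩)
  -- Claim 1: no S-vertex is adjacent to all of K
  have hSnotall : ∀ w ∈ S, ∃ x ∈ K, ¬ G.Adj w x := by
    intro w hw
    by_contra hno
    push_neg at hno
    have hwK : w ∉ K := fun h => (Finset.disjoint_left.mp hdis h) hw
    have hKS' : IsKS G (insert w K) (S.erase w) := by
      refine ⟨?_, ?_, ?_, ?_⟩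
      · intro v
        rcases hcov v with h | h
        · exact Or.inl (Finset.mem_insert_of_mem h)
        · by_cases hv : v = w
          · exact Or.inl (hv ▸ Finset.mem_insert_self w K)
          · exact Or.inr (Finset.mem_erase.mpr ⟨hv, h⟩)
      · rw [Finset.disjoint_left]
        intro x hx hx'
        rcases Finset.mem_insert.mp hx with rfl | hxK
        · exact (Finset.mem_erase.mp hx').1 rfl
        · exact (Finset.disjoint_left.mp hdis hxK) (Finset.mem_erase.mp hx').2
      · rw [Finset.coe_insert]
        apply SimpleGraph.IsClique.insert hcl
        intro b hb _
        exact hno b hb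
      · exact Set.Pairwise.mono (Finset.coe_subset.mpr (Finset.erase_subset _ _)) hind
    have := hKmax _ _ hKS'
    rw [Finset.card_insert_of_notMem hwK] at this
    omega
  have hKuS : K ∪ S = Finset.univ :=
    Finset.eq_univ_iff_forall.mpr fun v => Finset.mem_union.mpr (hcov v)
  have hcardsum : ∀ s : Finset V, s.card = (s ∩ K).card + (s ∩ S).card := by
    intro s
    rw [← Finset.card_union_of_disjoint
      (hdis.mono Finset.inter_subset_right Finset.inter_subset_right),
      ← Finset.inter_union_distrib_left, hKuS, Finset.inter_univ]
  have hinterK : ∀ s : Finset V, IsIndepSet G (↑s) → (s ∩ K).card ≤ 1 := by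
    intro s hs
    rw [Finset.card_le_one]
    intro x hx y hy
    by_contra hxy
    obtain ⟨hxs, hxK⟩ := Finset.mem_inter.mp hx
    obtain ⟨hys, hyK⟩ := Finset.mem_inter.mp hy
    exact hs (Finset.mem_coe.mpr hxs) (Finset.mem_coe.mpr hys) hxy
      (hcl (Finset.mem_coe.mpr hxK) (Finset.mem_coe.mpr hyK) hxy)
  have hcliquemax : ∀ s : Finset V, G.IsClique (↑s) → s.card ≤ k := by
    intro s hs
    by_contra hbig
    push_neg at hbig
    have h1 : (s ∩ S).card ≤ 1 := by
      rw [Finset.card_le_one]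
      intro x hx y hy
      by_contra hxy
      obtain ⟨hxs, hxS⟩ := Finset.mem_inter.mp hx
      obtain ⟨hys, hyS⟩ := Finset.mem_inter.mp hy
      exact hind (Finset.mem_coe.mpr hxS) (Finset.mem_coe.mpr hyS) hxy
        (hs (Finset.mem_coe.mpr hxs) (Finset.mem_coe.mpr hys) hxy)
    have h2 := hcardsum s
    have h3 : (s ∩ K).card ≤ k := Finset.card_le_card Finset.inter_subset_right
    have h4 : (s ∩ K) = K := Finset.eq_of_subset_of_card_le Finset.inter_subset_right (by omega)
    have h5 : K ⊆ s := by
      intro x hx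
      have : x ∈ s ∩ K := h4.symm ▸ hx
      exact (Finset.mem_inter.mp this).1
    obtain ⟨w, hw⟩ : (s ∩ S).Nonempty := Finset.card_pos.mp (by omega)
    obtain ⟨hws, hwS⟩ := Finset.mem_inter.mp hw
    obtain ⟨x, hxK, hnadj⟩ := hSnotall w hwS
    have hwx : w ≠ x := fun h => (Finset.disjoint_left.mp hdis hxK) (h ▸ hwS)
    exact hnadj (hs (Finset.mem_coe.mpr hws) (Finset.mem_coe.mpr (h5 hxK)) hwx)
  have hclnum : cliqueNum G = k := by
    have hmem : k ∈ {n | ∃ s : Finset V, G.IsNClique n s} := ⟨K, hcl, rfl⟩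
    have hub : ∀ m ∈ {n | ∃ s : Finset V, G.IsNClique n s}, m ≤ k := by
      rintro m ⟨s, hs⟩
      rw [← hs.card_eq]
      exact hcliquemax s hs.isClique
    exact le_antisymm (csSup_le ⟨k, hmem⟩ hub) (le_csSup ⟨k, hub⟩ hmem)
  -- independence number
  have hindub : ∀ n ∈ {n | ∃ s : Finset V, IsIndepSet G (↑s) ∧ s.card = n}, n ≤ S.card + 1 := by
    rintro n ⟨s, hsind, rfl⟩
    have h1 := hinterK s hsind
    have h2 := hcardsum s
    have h3 : (s ∩ S).card ≤ S.card := Finset.card_le_card Finset.inter_subset_right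
    omega
  have hmemS : S.card ∈ {n | ∃ s : Finset V, IsIndepSet G (↑s) ∧ s.card = n} := ⟨S, hind, rfl⟩
  have hbdd : BddAbove {n | ∃ s : Finset V, IsIndepSet G (↑s) ∧ s.card = n} :=
    ⟨S.card + 1, hindub⟩
  have hSle : S.card ≤ indepNum G := le_csSup hbdd hmemS
  have hlub : indepNum G ≤ S.card + 1 := csSup_le ⟨_, hmemS⟩ hindub
  have hne : ¬ (S.card = indepNum G) := fun h =>
    hnb ⟨K, S, ⟨hcov, hdis, hcl, hind⟩, hclnum.symm, h⟩
  have hα : indepNum G = S.card + 1 := by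
    rcases lt_or_eq_of_le hSle with h | h
    · omega
    · exact absurd h hne
  have hmemα : indepNum G ∈ {n | ∃ s : Finset V, IsIndepSet G (↑s) ∧ s.card = n} :=
    Nat.sSup_mem ⟨_, hmemS⟩ hbdd
  obtain ⟨I, hIind, hIcard⟩ := hmemα
  rw [hα] at hIcard
  have hIK1 : (I ∩ K).card ≤ 1 := hinterK I hIind
  have hIS : (I ∩ S).card ≤ S.card := Finset.card_le_card Finset.inter_subset_right
  have hIsum := hcardsum I
  have hIK : (I ∩ K).card = 1 := by omega
  obtain ⟨u, hu⟩ := Finset.card_eq_one.mp hIK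
  have huIK : u ∈ I ∩ K := hu ▸ Finset.mem_singleton_self u
  have huK : u ∈ K := (Finset.mem_inter.mp huIK).2
  have huI : u ∈ I := (Finset.mem_inter.mp huIK).1
  have hISeq : I ∩ S = S := Finset.eq_of_subset_of_card_le Finset.inter_subset_right (by omega)
  have hSsubI : S ⊆ I := by
    intro w hw
    have : w ∈ I ∩ S := hISeq.symm ▸ hw
    exact (Finset.mem_inter.mp this).1
  have hunadjS : ∀ w ∈ S, ¬ G.Adj u w := by
    intro w hw
    have hwI : w ∈ I := hSsubI hw
    have hne' : u ≠ w := fun h => Finset.disjoint_left.mp hdis huK (h ▸ hw)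
    exact hIind (Finset.mem_coe.mpr huI) (Finset.mem_coe.mpr hwI) hne'
  have hNu : G.neighborFinset u = K.erase u := by
    ext y
    rw [SimpleGraph.mem_neighborFinset, Finset.mem_erase]
    constructor
    · intro hadj
      refine ⟨fun h => G.loopless.irrefl u (h ▸ hadj), ?_⟩
      rcases hcov y with h | h
      · exact h
      · exact absurd hadj (hunadjS y h)
    · rintro ⟨hne', hyK⟩
      exact hcl (Finset.mem_coe.mpr huK) (Finset.mem_coe.mpr hyK) (fun h => hne' h.symm)
  have hdegu : G.degree u = k - 1 := by
    rw [← SimpleGraph.card_neighborFinset_eq_degree, hNu, Finset.card_erase_of_mem huK]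
  have hk2 : 2 ≤ k := by
    have h1 := hiso u
    have h2 : 1 ≤ k := Finset.card_pos.mpr ⟨u, huK⟩
    omega
  have hdegK : ∀ v ∈ K, k - 1 ≤ G.degree v := by
    intro v hv
    have hsub : K.erase v ⊆ G.neighborFinset v := by
      intro y hy
      rw [SimpleGraph.mem_neighborFinset]
      obtain ⟨hne', hyK⟩ := Finset.mem_erase.mp hy
      exact hcl (Finset.mem_coe.mpr hv) (Finset.mem_coe.mpr hyK) (fun h => hne' h.symm)
    have := Finset.card_le_card hsub
    rwa [Finset.card_erase_of_mem hv, SimpleGraph.card_neighborFinset_eq_degree] at this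
  have hdegS : ∀ w ∈ S, G.degree w ≤ k - 1 := by
    intro w hw
    obtain ⟨x, hxK, hnadj⟩ := hSnotall w hw
    have hsub : G.neighborFinset w ⊆ K.erase x := by
      intro y hy
      rw [SimpleGraph.mem_neighborFinset] at hy
      rw [Finset.mem_erase]
      constructor
      · rintro rfl
        exact hnadj hy
      · rcases hcov y with h | h
        · exact h
        · exact absurd hy (hind (Finset.mem_coe.mpr hw) (Finset.mem_coe.mpr h) hy.ne)
    have := Finset.card_le_card hsub
    rwa [Finset.card_erase_of_mem hxK, SimpleGraph.card_neighborFinset_eq_degree] at this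
  have hnotK : ∀ w, w ∉ K → ∃ x, x ∈ K ∧ ¬ G.Adj w x := by
    intro w hw
    obtain ⟨x, h1, h2⟩ := hSnotall w ((hcov w).resolve_left hw)
    exact ⟨x, h1, h2⟩
  have hchrom : chromNum G = k := chromNum_eq_of_KS G K S ⟨hcov, hdis, hcl, hind⟩ hnotK
  -- the complement
  have hKSc : IsKS Gᶜ I (K.erase u) := by
    refine ⟨?_, ?_, ?_, ?_⟩
    · intro v
      rcases hcov v with h | h
      · by_cases hvu : v = u
        · exact Or.inl (hvu ▸ huI)
        · exact Or.inr (Finset.mem_erase.mpr ⟨hvu, h⟩)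
      · exact Or.inl (hSsubI h)
    · rw [Finset.disjoint_left]
      intro x hxI hxE
      obtain ⟨hxu, hxK⟩ := Finset.mem_erase.mp hxE
      have : x ∈ I ∩ K := Finset.mem_inter.mpr ⟨hxI, hxK⟩
      rw [hu, Finset.mem_singleton] at this
      exact hxu this
    · intro x hx y hy hne'
      rw [SimpleGraph.compl_adj]
      exact ⟨hne', hIind hx hy hne'⟩
    · intro x hx y hy hne' hadj
      rw [SimpleGraph.compl_adj] at hadj
      obtain ⟨hxu, hxK⟩ := Finset.mem_erase.mp (Finset.mem_coe.mp hx)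
      obtain ⟨hyu, hyK⟩ := Finset.mem_erase.mp (Finset.mem_coe.mp hy)
      exact hadj.2 (hcl (Finset.mem_coe.mpr hxK) (Finset.mem_coe.mpr hyK) hne')
  have hnotI : ∀ w, w ∉ I → ∃ x, x ∈ I ∧ ¬ Gᶜ.Adj w x := by
    intro w hw
    have hwK : w ∈ K := by
      rcases hcov w with h | h
      · exact h
      · exact absurd (hSsubI h) hw
    have hwu : w ≠ u := fun h => hw (h ▸ huI)
    refine ⟨u, huI, ?_⟩
    rw [SimpleGraph.compl_adj]
    rintro ⟨_, h2⟩
    exact h2 (hcl (Finset.mem_coe.mpr hwK) (Finset.mem_coe.mpr huK) hwu)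
  have hchromc : chromNum Gᶜ = S.card + 1 := by
    rw [chromNum_eq_of_KS Gᶜ I (K.erase u) hKSc hnotI, hIcard]
  have hcardV : k + S.card = Fintype.card V := by
    rw [hk, ← Finset.card_union_of_disjoint hdis, hKuS, Finset.card_univ]
  have hNG : IsNG G := by
    show chromNum G + chromNum Gᶜ = Fintype.card V + 1
    rw [hchrom, hchromc]
    omega
  have hngA : ngA G = {v | G.degree v = k - 1} := by
    unfold ngA
    rw [hchrom]
  set AK := K.filter (fun v => G.degree v = k - 1) with hAKdef
  set AS := S.filter (fun v => G.degree v = k - 1) with hASdef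
  have huAK : u ∈ AK := Finset.mem_filter.mpr ⟨huK, hdegu⟩
  have hAK1 : 1 ≤ AK.card := Finset.card_pos.mpr ⟨u, huAK⟩
  have hE1 : G.IsClique (ngA G) ↔ AS = ∅ := by
    rw [hngA]
    constructor
    · intro hclA
      rw [Finset.eq_empty_iff_forall_notMem]
      intro w hwAS
      obtain ⟨hwS, hwdeg⟩ := Finset.mem_filter.mp hwAS
      have hne' : u ≠ w := fun h => Finset.disjoint_left.mp hdis huK (h ▸ hwS)
      have hadj := hclA (show u ∈ {v | G.degree v = k - 1} from hdegu)
        (show w ∈ {v | G.degree v = k - 1} from hwdeg) hne'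
      exact hunadjS w hwS hadj
    · intro hASe x hx y hy hne'
      simp only [Set.mem_setOf_eq] at hx hy
      have hxK : x ∈ K := by
        rcases hcov x with h | h
        · exact h
        · exact absurd (show x ∈ AS from Finset.mem_filter.mpr ⟨h, hx⟩)
            (by rw [hASe]; exact Finset.notMem_empty x)
      have hyK : y ∈ K := by
        rcases hcov y with h | h
        · exact h
        · exact absurd (show y ∈ AS from Finset.mem_filter.mpr ⟨h, hy⟩)
            (by rw [hASe]; exact Finset.notMem_empty y)
      exact hcl (Finset.mem_coe.mpr hxK) (Finset.mem_coe.mpr hyK) hne'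
  have hE2 : IsIndepSet G (ngA G) ↔ AK.card = 1 := by
    rw [hngA]
    constructor
    · intro hidA
      have hsub : AK ⊆ {u} := by
        intro x hx
        obtain ⟨hxK, hxdeg⟩ := Finset.mem_filter.mp hx
        rw [Finset.mem_singleton]
        by_contra hxu
        exact hidA (show x ∈ {v | G.degree v = k - 1} from hxdeg)
          (show u ∈ {v | G.degree v = k - 1} from hdegu) hxu
          (hcl (Finset.mem_coe.mpr hxK) (Finset.mem_coe.mpr huK) hxu)
      have : AK = {u} := Finset.Subset.antisymm hsub (Finset.singleton_subset_iff.mpr huAK)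
      rw [this, Finset.card_singleton]
    · intro h1 x hx y hy hne' hadj
      have hAKu : AK = {u} := by
        obtain ⟨z, hz⟩ := Finset.card_eq_one.mp h1
        have : u = z := Finset.mem_singleton.mp (hz ▸ huAK)
        rw [hz, this]
      simp only [Set.mem_setOf_eq] at hx hy
      rcases hcov x with hxK | hxS <;> rcases hcov y with hyK | hyS
      · have hxA : x ∈ AK := show x ∈ AK from Finset.mem_filter.mpr ⟨hxK, hx⟩
        have hyA : y ∈ AK := show y ∈ AK from Finset.mem_filter.mpr ⟨hyK, hy⟩
        rw [hAKu, Finset.mem_singleton] at hxA hyA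
        exact hne' (hxA.trans hyA.symm)
      · have hxA : x ∈ AK := Finset.mem_filter.mpr ⟨hxK, hx⟩
        rw [hAKu, Finset.mem_singleton] at hxA
        exact hunadjS y hyS (hxA ▸ hadj)
      · have hyA : y ∈ AK := Finset.mem_filter.mpr ⟨hyK, hy⟩
        rw [hAKu, Finset.mem_singleton] at hyA
        exact hunadjS x hxS (hyA ▸ hadj.symm)
      · exact hind (Finset.mem_coe.mpr hxS) (Finset.mem_coe.mpr hyS) hne' hadj
  -- counting in the degree sequence
  have hn : π.length = Fintype.card V := by
    have := congrArg Multiset.card hπ.2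
    simpa using this
  have hkn : k ≤ Fintype.card V := by omega
  set T := π.countP (fun x => decide (k - 1 ≤ x)) with hTdef
  set t := π.countP (fun x => decide (k ≤ x)) with htdef
  have hTle : T ≤ π.length := List.countP_le_length
  have hT : T = k + AS.card := by
    rw [hTdef, countP_degseq G π hπ.2]
    have hfe : Finset.univ.filter (fun v => k - 1 ≤ G.degree v) = K ∪ AS := by
      ext v
      simp only [Finset.mem_filter, Finset.mem_univ, true_and, Finset.mem_union]
      constructor
      · intro hdeg
        rcases hcov v with h | h
        · exact Or.inl h
        · exact Or.inr (Finset.mem_filter.mpr ⟨h, le_antisymm (hdegS v h) hdeg⟩)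
      · rintro (h | h)
        · exact hdegK v h
        · exact (Finset.mem_filter.mp h).2.ge
    rw [hfe, Finset.card_union_of_disjoint (hdis.mono_right (Finset.filter_subset _ _))]
  have ht : t + AK.card = k := by
    have hfe : Finset.univ.filter (fun v => k ≤ G.degree v)
        = K.filter (fun v => ¬ G.degree v = k - 1) := by
      ext v
      simp only [Finset.mem_filter, Finset.mem_univ, true_and]
      constructor
      · intro hdeg
        have hvK : v ∈ K := by
          rcases hcov v with h | h
          · exact h
          · exact absurd hdeg (by have := hdegS v h; omega)
        exact ⟨hvK, by omega⟩
      · rintro ⟨hvK, hdeg⟩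
        have := hdegK v hvK
        omega
    have h2 : t = (K.filter (fun v => ¬ G.degree v = k - 1)).card := by
      rw [htdef, countP_degseq G π hπ.2, hfe]
    have h3 := Finset.card_filter_add_card_filter_not
      (s := K) (p := fun v => G.degree v = k - 1)
    rw [hAKdef]
    omega
  have htk : t ≤ k - 1 := by omega
  have hTk : k ≤ T := by omega
  have key : ∀ c i, i < π.length →
      (c ≤ π.getD i 0 ↔ i < π.countP (fun x => decide (c ≤ x))) :=
    fun c i hi => sorted_getD_iff π hπ.1 c i hi
  have hk1n : k - 1 < π.length := by omega
  have hDk1 : π.getD (k - 1) 0 = k - 1 := by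
    have h1 : k - 1 ≤ π.getD (k - 1) 0 := (key (k - 1) (k - 1) hk1n).mpr (by omega)
    have h2 : ¬ (k ≤ π.getD (k - 1) 0) := fun h => by
      have := (key k (k - 1) hk1n).mp h
      omega
    omega
  have hDhigh : ∀ i, k - 1 ≤ i → i < π.length → π.getD i 0 ≤ k - 1 := by
    intro i h1 h2
    by_contra h
    push_neg at h
    have := (key k i h2).mp (by omega)
    omega
  have hDlow : ∀ i, i < k → k - 1 ≤ π.getD i 0 := by
    intro i h1
    exact (key (k - 1) i (by omega)).mpr (by omega)
  -- the alpha condition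
  have halpha : (∀ x ∈ alphaOf π, 2 ≤ x) ↔ t = k - 1 := by
    constructor
    · intro hall
      have hcond : (k - 2) + 1 ≤ π.getD (k - 2) 0 := by
        have := hDlow (k - 2) (by omega)
        omega
      have hx : (π.getD (k - 2) 0 - (k - 2)) ∈ alphaOf π := by
        unfold alphaOf
        exact List.mem_filterMap.mpr ⟨k - 2, List.mem_range.mpr (by omega), by rw [if_pos hcond]⟩
      have h2 := hall _ hx
      have h3 : k ≤ π.getD (k - 2) 0 := by omega
      have := (key k (k - 2) (by omega)).mp h3
      omega
    · intro ht' x hx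
      unfold alphaOf at hx
      obtain ⟨i, hi, hfx⟩ := List.mem_filterMap.mp hx
      rw [List.mem_range] at hi
      by_cases hcond : i + 1 ≤ π.getD i 0
      · rw [if_pos hcond, Option.some.injEq] at hfx
        have hik : i < k - 1 := by
          by_contra h'
          push_neg at h'
          have := hDhigh i h' hi
          omega
        have : k ≤ π.getD i 0 := (key k i hi).mpr (by omega)
        omega
      · rw [if_neg hcond] at hfx
        exact absurd hfx (by simp)
  -- the beta condition
  have hbpos : ∀ j, j < k - 1 → betaColCount π (j + 1) ≠ 0 := by
    intro j hj h0
    have hmem : (k - 1) ∈ (List.range π.length).filter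
        (fun i => decide (j + 1 ≤ i ∧ j + 1 ≤ π.getD i 0)) := by
      rw [List.mem_filter, List.mem_range]
      refine ⟨by omega, ?_⟩
      simp only [decide_eq_true_eq]
      rw [hDk1]
      omega
    unfold betaColCount at h0
    rw [List.length_eq_zero_iff] at h0
    rw [h0] at hmem
    exact List.not_mem_nil hmem
  have hbzero : ∀ j, k - 1 ≤ j → betaColCount π (j + 1) = 0 := by
    intro j hj
    unfold betaColCount
    rw [List.length_eq_zero_iff, List.filter_eq_nil_iff]
    intro i hi
    rw [List.mem_range] at hi
    simp only [decide_eq_true_eq, not_and]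
    intro h1
    have := hDhigh i (by omega) hi
    omega
  have hrange : List.range π.length
      = List.range (k - 1) ++ (List.range (π.length - (k - 1))).map (fun x => (k - 1) + x) := by
    rw [← List.range_add]
    congr 1
    omega
  have hbeta : betaOf π = (List.range (k - 1)).map (fun j => betaColCount π (j + 1)) := by
    unfold betaOf
    rw [hrange, List.map_append, List.filter_append, List.map_map]
    have e1 : ((List.range (k - 1)).map (fun j => betaColCount π (j + 1))).filter
        (fun c => c != 0) = (List.range (k - 1)).map (fun j => betaColCount π (j + 1)) := by
      rw [List.filter_eq_self]
      intro c hc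
      obtain ⟨j, hj, rfl⟩ := List.mem_map.mp hc
      rw [List.mem_range] at hj
      simpa using hbpos j hj
    have e2 : ((List.range (π.length - (k - 1))).map
        ((fun j => betaColCount π (j + 1)) ∘ (fun x => (k - 1) + x))).filter
        (fun c => c != 0) = [] := by
      rw [List.filter_eq_nil_iff]
      intro c hc
      obtain ⟨j, hj, rfl⟩ := List.mem_map.mp hc
      simp only [Function.comp]
      simpa using hbzero ((k - 1) + j) (by omega)
    rw [e1, e2, List.append_nil]
  have hlastval : (betaOf π).getLast? = some (betaColCount π (k - 1)) := by
    rw [hbeta, List.getLast?_eq_getElem?]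
    have hlen : ((List.range (k - 1)).map (fun j => betaColCount π (j + 1))).length = k - 1 := by
      simp
    rw [hlen, List.getElem?_map, List.getElem?_range (by omega : k - 1 - 1 < k - 1)]
    simp only [Option.map_some]
    rw [show k - 1 - 1 + 1 = k - 1 by omega]
  have hbval : betaColCount π (k - 1) = T - (k - 1) := by
    unfold betaColCount
    have hpq : ∀ i ∈ List.range π.length,
        (decide (k - 1 ≤ i ∧ k - 1 ≤ π.getD i 0)) = (decide (k - 1 ≤ i ∧ i < T)) := by
      intro i hi
      rw [List.mem_range] at hi
      simp only [decide_eq_decide]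
      constructor
      · rintro ⟨h1, h2⟩
        exact ⟨h1, (key (k - 1) i hi).mp h2⟩
      · rintro ⟨h1, h2⟩
        exact ⟨h1, (key (k - 1) i hi).mpr h2⟩
    rw [List.filter_congr hpq, length_filter_range_interval, min_eq_left hTle]
  have hbool : (betaOf π).getLast? = some 1 ↔ AS = ∅ := by
    rw [hlastval, hbval, Option.some.injEq]
    constructor
    · intro h
      have : AS.card = 0 := by omega
      exact Finset.card_eq_zero.mp this
    · intro h
      have : AS.card = 0 := by rw [h]; rfl
      omega
  refine ⟨?_, ?_⟩
  · constructor
    · rintro ⟨_, hclA⟩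
      exact hbool.mpr (hE1.mp hclA)
    · intro h
      exact ⟨hNG, hE1.mpr (hbool.mp h)⟩
  · constructor
    · rintro ⟨_, hidA⟩
      have := hE2.mp hidA
      exact halpha.mpr (by omega)
    · intro h
      refine ⟨hNG, hE2.mpr ?_⟩
      have := halpha.mp h
      omega
end

section
/- Every unbalanced split graph with no isolated vertices is an NG-1 graph or an NG-2 graph (or both). -/
section AuxStmt17

open Finset

variable {V : Type} [Fintype V]

lemma cliqueSet_nonempty (G : SimpleGraph V) :
    {n | ∃ s : Finset V, G.IsNClique n s}.Nonempty :=
  ⟨0, ∅, SimpleGraph.isNClique_empty.mpr rfl⟩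

lemma cliqueSet_bdd (G : SimpleGraph V) :
    BddAbove {n | ∃ s : Finset V, G.IsNClique n s} := by
  refine ⟨Fintype.card V, ?_⟩
  rintro n ⟨s, hs⟩
  rw [← hs.card_eq]
  exact Finset.card_le_univ s

lemma indepSet_nonempty (G : SimpleGraph V) :
    {n | ∃ s : Finset V, IsIndepSet G (s : Set V) ∧ s.card = n}.Nonempty :=
  ⟨0, ∅, by simp [IsIndepSet]⟩

lemma indepSet_bdd (G : SimpleGraph V) :
    BddAbove {n | ∃ s : Finset V, IsIndepSet G (s : Set V) ∧ s.card = n} := by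
  refine ⟨Fintype.card V, ?_⟩
  rintro n ⟨s, _, rfl⟩
  exact Finset.card_le_univ s

lemma card_le_cliqueNum {G : SimpleGraph V} {n : ℕ} {s : Finset V}
    (hs : G.IsNClique n s) : n ≤ cliqueNum G :=
  le_csSup (cliqueSet_bdd G) ⟨s, hs⟩

lemma card_le_indepNum {G : SimpleGraph V} {s : Finset V}
    (hs : IsIndepSet G (s : Set V)) : s.card ≤ indepNum G :=
  le_csSup (indepSet_bdd G) ⟨s, hs, rfl⟩

lemma isKS_compl {G : SimpleGraph V} {K S : Finset V} (h : IsKS G K S) :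
    IsKS Gᶜ S K := by
  obtain ⟨hcov, hdisj, hcl, hind⟩ := h
  refine ⟨fun v => (hcov v).symm, hdisj.symm, ?_, ?_⟩
  · intro a ha b hb hne
    exact (SimpleGraph.compl_adj G a b).mpr ⟨hne, hind ha hb hne⟩
  · intro a ha b hb hne hadj
    exact ((SimpleGraph.compl_adj G a b).mp hadj).2 (hcl ha hb hne)

lemma cliqueNum_compl (G : SimpleGraph V) : cliqueNum Gᶜ = indepNum G := by
  unfold cliqueNum indepNum
  congr 1
  ext n
  constructor
  · rintro ⟨s, hs⟩
    refine ⟨s, ?_, hs.card_eq⟩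
    intro a ha b hb hne
    exact ((SimpleGraph.compl_adj G a b).mp (hs.isClique ha hb hne)).2
  · rintro ⟨s, hs, rfl⟩
    refine ⟨s, ⟨?_, rfl⟩⟩
    intro a ha b hb hne
    exact (SimpleGraph.compl_adj G a b).mpr ⟨hne, hs ha hb hne⟩

lemma exists_Kmax {G : SimpleGraph V} (h : IsSplit G) :
    ∃ K S, IsKS G K S ∧ K.card = cliqueNum G := by
  classical
  set T : Set ℕ := {k | ∃ K S : Finset V, IsKS G K S ∧ K.card = k} with hT
  have hne : T.Nonempty := by
    obtain ⟨K, S, hKS⟩ := h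
    exact ⟨K.card, K, S, hKS, rfl⟩
  have hbdd : BddAbove T := by
    refine ⟨Fintype.card V, ?_⟩
    rintro k ⟨K, S, hKS, rfl⟩
    exact Finset.card_le_univ K
  obtain ⟨K, S, hKS, hKcard⟩ := Nat.sSup_mem hne hbdd
  have hmax : ∀ w ∈ S, ∃ k ∈ K, ¬ G.Adj w k := by
    intro w hw
    by_contra hno
    push_neg at hno
    have hwK : w ∉ K := fun hwK => (Finset.disjoint_left.mp hKS.2.1 hwK hw).elim
    have hcl : G.IsClique ((insert w K : Finset V) : Set V) := by
      rw [Finset.coe_insert]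
      exact hKS.2.2.1.insert (fun b hb _ => hno b hb)
    have hKS' : IsKS G (insert w K) (S.erase w) := by
      refine ⟨?_, ?_, hcl, ?_⟩
      · intro v
        rcases hKS.1 v with hv | hv
        · exact Or.inl (Finset.mem_insert_of_mem hv)
        · by_cases hvw : v = w
          · exact Or.inl (hvw ▸ Finset.mem_insert_self w K)
          · exact Or.inr (Finset.mem_erase.mpr ⟨hvw, hv⟩)
      · rw [Finset.disjoint_left]
        intro x hx hx'
        rcases Finset.mem_insert.mp hx with rfl | hx
        · exact (Finset.mem_erase.mp hx').1 rfl
        · exact Finset.disjoint_left.mp hKS.2.1 hx (Finset.mem_of_mem_erase hx')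
      · exact hKS.2.2.2.mono
          (fun x hx => Finset.mem_coe.mpr (Finset.mem_of_mem_erase (Finset.mem_coe.mp hx)))
    have hmem : (insert w K).card ∈ T := ⟨insert w K, S.erase w, hKS', rfl⟩
    have : (insert w K).card ≤ sSup T := le_csSup hbdd hmem
    rw [Finset.card_insert_of_notMem hwK, ← hKcard] at this
    omega
  have hup : cliqueNum G ≤ K.card := by
    refine csSup_le (cliqueSet_nonempty G) ?_
    rintro n ⟨s, hs⟩
    rw [← hs.card_eq]
    by_cases hsS : ∃ w ∈ s, w ∈ S
    · obtain ⟨w, hws, hwS⟩ := hsS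
      obtain ⟨k, hkK, hk⟩ := hmax w hwS
      have hks : k ∉ s := by
        intro hks
        have hkw : k ≠ w := fun hkw =>
          Finset.disjoint_left.mp hKS.2.1 hkK (hkw ▸ hwS)
        exact hk ((hs.isClique hks hws hkw).symm)
      -- s ∩ K ⊆ K.erase k, s ∩ S has card ≤ 1
      have h1 : s ∩ K ⊆ K.erase k := by
        intro x hx
        rcases Finset.mem_inter.mp hx with ⟨hx1, hx2⟩
        exact Finset.mem_erase.mpr ⟨fun hxk => hks (hxk ▸ hx1), hx2⟩
      have h2 : (s ∩ S).card ≤ 1 := by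
        rw [Finset.card_le_one]
        intro a ha b hb
        by_contra hab
        exact hKS.2.2.2 (Finset.mem_inter.mp ha).2 (Finset.mem_inter.mp hb).2 hab
          (hs.isClique (Finset.mem_inter.mp ha).1 (Finset.mem_inter.mp hb).1 hab)
      have hsplit : s.card = (s ∩ K).card + (s ∩ S).card := by
        rw [← Finset.card_union_of_disjoint
          (hKS.2.1.mono (Finset.inter_subset_right) (Finset.inter_subset_right))]
        congr 1
        ext x
        simp only [Finset.mem_union, Finset.mem_inter]
        constructor
        · intro hx; rcases hKS.1 x with h | h
          · exact Or.inl ⟨hx, h⟩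
          · exact Or.inr ⟨hx, h⟩
        · rintro (⟨hx, _⟩ | ⟨hx, _⟩) <;> exact hx
      have h3 : (s ∩ K).card ≤ K.card - 1 := by
        calc (s ∩ K).card ≤ (K.erase k).card := Finset.card_le_card h1
        _ = K.card - 1 := Finset.card_erase_of_mem hkK
      have hK1 : 1 ≤ K.card := Finset.card_pos.mpr ⟨k, hkK⟩
      omega
    · push_neg at hsS
      have : s ⊆ K := by
        intro x hx
        rcases hKS.1 x with h | h
        · exact h
        · exact absurd h (hsS x hx)
      exact Finset.card_le_card this
  exact ⟨K, S, hKS, le_antisymm (card_le_cliqueNum ⟨hKS.2.2.1, rfl⟩) hup⟩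

/-- In a K-max partition, every independent-side vertex misses some clique vertex. -/
lemma misses_of_Kmax {G : SimpleGraph V} {K S : Finset V} (hKS : IsKS G K S)
    (hmax : K.card = cliqueNum G) : ∀ w ∈ S, ∃ k ∈ K, ¬ G.Adj w k := by
  classical
  intro w hw
  by_contra hno
  push_neg at hno
  have hwK : w ∉ K := fun hwK => (Finset.disjoint_left.mp hKS.2.1 hwK hw).elim
  have hcl : G.IsNClique (K.card + 1) (insert w K) := by
    constructor
    · rw [Finset.coe_insert]
      exact hKS.2.2.1.insert (fun b hb _ => hno b hb)
    · rw [Finset.card_insert_of_notMem hwK]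
  have := card_le_cliqueNum hcl
  omega

lemma colorable_of_KS_s17 {G : SimpleGraph V} {K S : Finset V} (h : IsKS G K S)
    (hfull : ∀ w ∈ S, ∃ k ∈ K, ¬ G.Adj w k) : G.Colorable K.card := by
  classical
  by_cases hV : IsEmpty V
  · exact ⟨SimpleGraph.Coloring.mk (fun v => (hV.false v).elim)
      (fun {a b} _ => (hV.false a).elim)⟩
  rw [not_isEmpty_iff] at hV
  have hSmem : ∀ v : V, v ∉ K → v ∈ S := fun v hv => (h.1 v).resolve_left hv
  let c : V → {x // x ∈ K} := fun v =>
    if hv : v ∈ K then ⟨v, hv⟩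
    else ⟨Classical.choose (hfull v (hSmem v hv)),
      (Classical.choose_spec (hfull v (hSmem v hv))).1⟩
  have hc : ∀ v (hv : v ∉ K), ¬ G.Adj v (c v : V) := by
    intro v hv
    simp only [c, dif_neg hv]
    exact (Classical.choose_spec (hfull v (hSmem v hv))).2
  have valid : ∀ {a b : V}, G.Adj a b → c a ≠ c b := by
    intro a b hab hcab
    by_cases ha : a ∈ K <;> by_cases hb : b ∈ K
    · have : a = b := by
        simpa [c, dif_pos ha, dif_pos hb, Subtype.ext_iff] using hcab
      exact G.irrefl (this ▸ hab)
    · -- a ∈ K, b ∉ K : c b is a non-neighbor of b in K, c a = a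
      have hca : (c a : V) = a := by simp [c, dif_pos ha]
      have := hc b hb
      rw [← hcab, hca] at this
      exact this hab.symm
    · have hcb : (c b : V) = b := by simp [c, dif_pos hb]
      have := hc a ha
      rw [hcab, hcb] at this
      exact this hab
    · exact hc a ha (by rw [hcab]; exact ((h.2.2.2 (hSmem a ha) (hSmem b hb) hab.ne) hab).elim)
  have coloring : G.Coloring {x // x ∈ K} := SimpleGraph.Coloring.mk c valid
  have := coloring.colorable
  rwa [Fintype.card_coe] at this

lemma chromNum_colorable (G : SimpleGraph V) : G.Colorable (chromNum G) := by
  have h : Fintype.card V ∈ {n | G.Colorable n} := G.colorable_of_fintype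
  exact Nat.sInf_mem ⟨Fintype.card V, h⟩

lemma cliqueNum_le_chromNum (G : SimpleGraph V) : cliqueNum G ≤ chromNum G := by
  refine csSup_le (cliqueSet_nonempty G) ?_
  rintro n ⟨s, hs⟩
  rw [← hs.card_eq]
  exact hs.isClique.card_le_of_colorable (chromNum_colorable G)

lemma chromNum_eq_of_Kmax {G : SimpleGraph V} {K S : Finset V} (hKS : IsKS G K S)
    (hmax : K.card = cliqueNum G) : chromNum G = K.card := by
  refine le_antisymm (Nat.sInf_le (colorable_of_KS_s17 hKS (misses_of_Kmax hKS hmax))) ?_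
  rw [hmax]
  exact cliqueNum_le_chromNum G

lemma card_eq_of_KS {G : SimpleGraph V} {K S : Finset V} (hKS : IsKS G K S) :
    K.card + S.card = Fintype.card V := by
  classical
  rw [← Finset.card_union_of_disjoint hKS.2.1]
  rw [← Finset.card_univ]
  congr 1
  apply Finset.eq_univ_of_forall
  intro v
  rcases hKS.1 v with h | h
  · exact Finset.mem_union_left _ h
  · exact Finset.mem_union_right _ h

end AuxStmt17

/-- Every unbalanced split graph with no isolated vertices is an NG-1 graph
or an NG-2 graph (or both). -/
theorem stmt17 {V : Type} [Fintype V] (G : SimpleGraph V) [DecidableRel G.Adj]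
    (hG : IsUnbalancedSplit G) (hiso : NoIsolated G) :
    IsNG1 G ∨ IsNG2 G := by
  classical
  obtain ⟨hsplit, hnb⟩ := hG
  obtain ⟨K, S, hKS, hKmax⟩ := exists_Kmax hsplit
  -- independence number is S.card + 1
  have hSle : S.card ≤ indepNum G := card_le_indepNum hKS.2.2.2
  have hSne : S.card ≠ indepNum G := fun h => hnb ⟨K, S, hKS, hKmax, h⟩
  have hIle : indepNum G ≤ S.card + 1 := by
    refine csSup_le (indepSet_nonempty G) ?_
    rintro n ⟨t, ht, rfl⟩
    have h2 : (t ∩ K).card ≤ 1 := by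
      rw [Finset.card_le_one]
      intro a ha b hb
      by_contra hab
      exact ht (Finset.mem_coe.mpr (Finset.mem_inter.mp ha).1)
        (Finset.mem_coe.mpr (Finset.mem_inter.mp hb).1) hab
        (hKS.2.2.1 (Finset.mem_coe.mpr (Finset.mem_inter.mp ha).2)
          (Finset.mem_coe.mpr (Finset.mem_inter.mp hb).2) hab)
    have hsplit' : t.card = (t ∩ K).card + (t ∩ S).card := by
      rw [← Finset.card_union_of_disjoint
        (hKS.2.1.mono (Finset.inter_subset_right) (Finset.inter_subset_right))]
      congr 1
      ext x
      simp only [Finset.mem_union, Finset.mem_inter]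
      constructor
      · intro hx; rcases hKS.1 x with h | h
        · exact Or.inl ⟨hx, h⟩
        · exact Or.inr ⟨hx, h⟩
      · rintro (⟨hx, _⟩ | ⟨hx, _⟩) <;> exact hx
    have h3 : (t ∩ S).card ≤ S.card := Finset.card_le_card (Finset.inter_subset_right)
    omega
  have hα : indepNum G = S.card + 1 := by omega
  -- chromatic numbers
  have hχ : chromNum G = K.card := chromNum_eq_of_Kmax hKS hKmax
  obtain ⟨K', S', hKS', hK'max⟩ := exists_Kmax ⟨S, K, isKS_compl hKS⟩
  have hχc : chromNum Gᶜ = indepNum G := by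
    rw [chromNum_eq_of_Kmax hKS' hK'max, hK'max, cliqueNum_compl]
  have hn : K.card + S.card = Fintype.card V := card_eq_of_KS hKS
  have hNG : IsNG G := by
    unfold IsNG
    rw [hχ, hχc, hα]
    omega
  -- structure of the set A
  have hNS : ∀ s ∈ S, G.neighborFinset s ⊆ K := by
    intro s hs w hw
    rw [SimpleGraph.mem_neighborFinset] at hw
    rcases hKS.1 w with h | h
    · exact h
    · exact absurd hw (hKS.2.2.2 (Finset.mem_coe.mpr hs) (Finset.mem_coe.mpr h) hw.ne)
  have hKdeg : ∀ k ∈ K, K.erase k ⊆ G.neighborFinset k := by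
    intro k hk x hx
    rw [SimpleGraph.mem_neighborFinset]
    exact hKS.2.2.1 (Finset.mem_coe.mpr hk)
      (Finset.mem_coe.mpr (Finset.mem_of_mem_erase hx))
      (fun h => (Finset.mem_erase.mp hx).1 h.symm)
  have hF4 : ∀ k ∈ K, G.degree k = K.card - 1 → ∀ s ∈ S, ¬ G.Adj k s := by
    intro k hk hdeg s hs hadj
    have hsK : s ∉ K := fun h => Finset.disjoint_left.mp hKS.2.1 h hs
    have hsub : insert s (K.erase k) ⊆ G.neighborFinset k := by
      intro x hx
      rcases Finset.mem_insert.mp hx with rfl | hx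
      · exact (SimpleGraph.mem_neighborFinset G k x).mpr hadj
      · exact hKdeg k hk hx
    have hcard : (insert s (K.erase k)).card = K.card := by
      rw [Finset.card_insert_of_notMem (fun h => hsK (Finset.mem_of_mem_erase h)),
        Finset.card_erase_of_mem hk]
      have : 1 ≤ K.card := Finset.card_pos.mpr ⟨k, hk⟩
      omega
    have hle := Finset.card_le_card hsub
    rw [hcard, SimpleGraph.card_neighborFinset_eq_degree, hdeg] at hle
    have : 1 ≤ K.card := Finset.card_pos.mpr ⟨k, hk⟩
    omega
  have hF5 : ∀ s ∈ S, G.degree s = K.card - 1 → ∀ k₀ ∈ K, ∀ k₁ ∈ K, k₀ ≠ k₁ →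
      ¬ G.Adj s k₀ → ¬ G.Adj s k₁ → False := by
    intro s hs hdeg k₀ hk0 k₁ hk1 hkne h0 h1
    have hsub : G.neighborFinset s ⊆ (K.erase k₀).erase k₁ := by
      intro x hx
      have hxK := hNS s hs hx
      rw [SimpleGraph.mem_neighborFinset] at hx
      refine Finset.mem_erase.mpr ⟨fun h => h1 (h ▸ hx), Finset.mem_erase.mpr
        ⟨fun h => h0 (h ▸ hx), hxK⟩⟩
    have hle := Finset.card_le_card hsub
    rw [SimpleGraph.card_neighborFinset_eq_degree, hdeg,
      Finset.card_erase_of_mem (Finset.mem_erase.mpr ⟨hkne.symm, hk1⟩),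
      Finset.card_erase_of_mem hk0] at hle
    have h2 : 1 < K.card := Finset.one_lt_card.mpr ⟨k₀, hk0, k₁, hk1, hkne⟩
    omega
  have hmemA : ∀ v, v ∈ ngA G ↔ G.degree v = K.card - 1 := by
    intro v
    simp only [ngA, Set.mem_setOf_eq, hχ]
  by_cases hAS : ∃ s ∈ S, G.degree s = K.card - 1
  · -- mixed analysis: A is independent or a clique
    obtain ⟨s₀, hs₀S, hs₀deg⟩ := hAS
    right
    refine ⟨hNG, ?_⟩
    intro u hu v hv hne
    have hu' : G.degree u = K.card - 1 := (hmemA u).mp hu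
    have hv' : G.degree v = K.card - 1 := (hmemA v).mp hv
    rcases hKS.1 u with huK | huS <;> rcases hKS.1 v with hvK | hvS
    · -- both in K: impossible
      have h0 : ¬ G.Adj u s₀ := hF4 u huK hu' s₀ hs₀S
      have h1 : ¬ G.Adj v s₀ := hF4 v hvK hv' s₀ hs₀S
      exact (hF5 s₀ hs₀S hs₀deg u huK v hvK hne
        (fun h => h0 h.symm) (fun h => h1 h.symm)).elim
    · exact hF4 u huK hu' v hvS
    · exact fun h => hF4 v hvK hv' u huS h.symm
    · exact hKS.2.2.2 (Finset.mem_coe.mpr huS) (Finset.mem_coe.mpr hvS) hne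
  · -- A ⊆ K : clique
    left
    refine ⟨hNG, ?_⟩
    push_neg at hAS
    have hsub : ngA G ⊆ (K : Set V) := by
      intro v hv
      rw [hmemA] at hv
      rcases hKS.1 v with h | h
      · exact Finset.mem_coe.mpr h
      · exact absurd hv (hAS v h)
    exact hKS.2.2.1.subset hsub
end
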